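/- Let n≥3 be odd and u ∈ F_{3^n}\F_3 with χ(u+1)≠χ(u-1). With g₂(z)=z(z-1-u), g₃(z)=z(z-1+u), g₄(z)=z²-z+u², we have ∑_{z∈F_{3^n}} χ(g₂(z)g₃(z)g₄(z)) = -2. -/

import Mathlib

open Finset

theorem stmt_8 (n : ℕ) (hn : 3 ≤ n) (hodd : Odd n)
    (F : Type*) [Field F] [Fintype F] [DecidableEq F]
    (hcard : Fintype.card F = 3 ^ n)
    (u : F) (hu : u ^ 3 ≠ u)
    (huu : quadraticChar F (u + 1) ≠ quadraticChar F (u - 1)) :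
    (∑ z : F, quadraticChar F
        ((z * (z - 1 - u)) * (z * (z - 1 + u)) * (z ^ 2 - z + u ^ 2))) = -2 := by
  have hu0 : u ≠ 0 := fun h => hu (by rw [h]; ring)
  have hu1 : u ≠ 1 := fun h => hu (by rw [h]; ring)
  have hum1 : u ≠ -1 := fun h => hu (by rw [h]; ring)
  have hu2 : (u ^ 2 : F) ≠ 0 := pow_ne_zero 2 hu0
  -- the ring characteristic is 3, hence not 2
  have hchar3 : ringChar F = 3 := by
    have : CharP F (ringChar F) := ringChar.charP F
    obtain ⟨m, hp, hc⟩ := FiniteField.card F (ringChar F)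
    rw [hcard] at hc
    have hdvd : ringChar F ∣ 3 ^ n := by
      rw [hc]
      exact dvd_pow_self _ (by exact_mod_cast m.ne_zero)
    have := hp.dvd_of_dvd_pow hdvd
    exact (Nat.prime_dvd_prime_iff_eq hp Nat.prime_three).mp this
  have hchar : ringChar F ≠ 2 := by rw [hchar3]; norm_num
  -- the cardinality is 3 mod 4
  have hmod : Fintype.card F % 4 = 3 := by
    rw [hcard]
    obtain ⟨k, rfl⟩ := hodd
    have h9 : ((3 : ℕ) ^ 2) ^ k % 4 = 1 := by
      rw [Nat.pow_mod]; norm_num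
    have : (3 : ℕ) ^ (2 * k + 1) = ((3 : ℕ) ^ 2) ^ k * 3 := by
      rw [← pow_mul, pow_succ]
    rw [this]
    omega
  have hneg1 : quadraticChar F (-1) = -1 := by
    rw [quadraticChar_neg_one hchar, ZMod.χ₄_nat_three_mod_four hmod]
  -- χ(u+1) * χ(u-1) = -1
  have hup1 : (u + 1 : F) ≠ 0 := fun h => hum1 (by
    have : u = -1 := by linear_combination h
    exact this)
  have hum1' : (u - 1 : F) ≠ 0 := sub_ne_zero.mpr hu1
  have hprod : quadraticChar F (u + 1) * quadraticChar F (u - 1) = -1 := by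
    rcases quadraticChar_dichotomy hup1 with h | h <;>
      rcases quadraticChar_dichotomy hum1' with h' | h' <;>
        rw [h, h'] at huu ⊢ <;> simp_all
  have hsq1mu : quadraticChar F (1 - u ^ 2) = 1 := by
    have : (1 - u ^ 2 : F) = -1 * ((u + 1) * (u - 1)) := by ring
    rw [this, map_mul, map_mul, hneg1, hprod]
    norm_num
  -- Step A: pointwise factor out z^2
  have stepA : ∀ z : F,
      quadraticChar F ((z * (z - 1 - u)) * (z * (z - 1 + u)) * (z ^ 2 - z + u ^ 2)) =
        (if z = 0 then 0 else
          quadraticChar F (((z - 1) ^ 2 - u ^ 2) * (z ^ 2 - z + u ^ 2))) := by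
    intro z
    by_cases hz : z = 0
    · rw [if_pos hz, hz]
      rw [show ((0 : F) * (0 - 1 - u)) * ((0 : F) * (0 - 1 + u)) * ((0 : F) ^ 2 - 0 + u ^ 2)
          = 0 by ring]
      exact quadraticChar_zero
    · rw [if_neg hz]
      rw [show (z * (z - 1 - u)) * (z * (z - 1 + u)) * (z ^ 2 - z + u ^ 2)
          = z ^ 2 * ((((z - 1) ^ 2 - u ^ 2) * (z ^ 2 - z + u ^ 2))) by ring]
      rw [map_mul, quadraticChar_sq_one' hz, one_mul]
  -- rewrite the main sum using step A
  rw [Finset.sum_congr rfl fun z _ => stepA z]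
  -- split the if: sum = full sum − value at 0
  have split1 : (∑ z : F, (if z = 0 then (0 : ℤ) else
        quadraticChar F (((z - 1) ^ 2 - u ^ 2) * (z ^ 2 - z + u ^ 2)))) =
      (∑ z : F, quadraticChar F (((z - 1) ^ 2 - u ^ 2) * (z ^ 2 - z + u ^ 2)))
        - quadraticChar F (((0 - 1 : F) ^ 2 - u ^ 2) * ((0 : F) ^ 2 - 0 + u ^ 2)) := by
    have : ∀ z : F, (if z = 0 then (0 : ℤ) else
          quadraticChar F (((z - 1) ^ 2 - u ^ 2) * (z ^ 2 - z + u ^ 2))) =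
        quadraticChar F (((z - 1) ^ 2 - u ^ 2) * (z ^ 2 - z + u ^ 2)) -
          (if z = (0 : F) then
            quadraticChar F (((z - 1) ^ 2 - u ^ 2) * (z ^ 2 - z + u ^ 2)) else 0) := by
      intro z
      by_cases hz : z = 0 <;> simp [hz]
    rw [Finset.sum_congr rfl fun z _ => this z, Finset.sum_sub_distrib,
      Finset.sum_ite_eq' Finset.univ (0 : F)
        (fun z => quadraticChar F (((z - 1) ^ 2 - u ^ 2) * (z ^ 2 - z + u ^ 2)))]
    simp
  rw [split1]
  -- value at 0 of the h-polynomial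
  have hh0 : quadraticChar F (((0 - 1 : F) ^ 2 - u ^ 2) * ((0 : F) ^ 2 - 0 + u ^ 2)) = 1 := by
    rw [show (((0 - 1 : F) ^ 2 - u ^ 2) * ((0 : F) ^ 2 - 0 + u ^ 2)) = (1 - u ^ 2) * u ^ 2
      by ring]
    rw [map_mul, hsq1mu, quadraticChar_sq_one' hu0]
    norm_num
  rw [hh0]
  -- Step B: substitute z ↦ 1 - z
  have stepB : (∑ z : F, quadraticChar F (((z - 1) ^ 2 - u ^ 2) * (z ^ 2 - z + u ^ 2))) =
      ∑ z : F, quadraticChar F ((z ^ 2 - u ^ 2) * (z ^ 2 - z + u ^ 2)) := by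
    rw [← Equiv.sum_comp (Equiv.subLeft (1 : F))
      (fun z => quadraticChar F (((z - 1) ^ 2 - u ^ 2) * (z ^ 2 - z + u ^ 2)))]
    refine Finset.sum_congr rfl fun z _ => ?_
    congr 1
    show (((1 - z) - 1) ^ 2 - u ^ 2) * ((1 - z) ^ 2 - (1 - z) + u ^ 2) = _
    ring
  rw [stepB]
  -- Step C: the quartic sum equals -1 via the involution z ↦ u²/z
  have key : ∑ z ∈ Finset.univ.erase (0 : F),
      quadraticChar F ((z ^ 2 - u ^ 2) * (z ^ 2 - z + u ^ 2)) = 0 := by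
    refine Finset.sum_involution (fun a _ => u ^ 2 / a) ?_ ?_ ?_ ?_
    · intro a ha
      have ha0 : a ≠ 0 := (Finset.mem_erase.mp ha).1
      show quadraticChar F ((a ^ 2 - u ^ 2) * (a ^ 2 - a + u ^ 2)) +
        quadraticChar F (((u ^ 2 / a) ^ 2 - u ^ 2) *
          ((u ^ 2 / a) ^ 2 - u ^ 2 / a + u ^ 2)) = 0
      have hid : (((u ^ 2 / a) ^ 2 - u ^ 2) * ((u ^ 2 / a) ^ 2 - u ^ 2 / a + u ^ 2)) * a ^ 4
          = -1 * (u ^ 2) ^ 2 * ((a ^ 2 - u ^ 2) * (a ^ 2 - a + u ^ 2)) := by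
        field_simp
        ring
      have h4 : quadraticChar F (a ^ 4) = 1 := by
        rw [show a ^ 4 = (a ^ 2) ^ 2 by ring]
        exact quadraticChar_sq_one' (pow_ne_zero 2 ha0)
      have hmain := congrArg (quadraticChar F) hid
      simp only [map_mul] at hmain ⊢
      rw [h4, hneg1, quadraticChar_sq_one' hu2] at hmain
      linarith [hmain]
    · intro a ha h
      intro hg
      apply h
      have ha0 : a ≠ 0 := (Finset.mem_erase.mp ha).1
      have hg' : u ^ 2 / a = a := hg
      have : a ^ 2 = u ^ 2 := by
        field_simp at hg'
        linear_combination -hg'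
      rw [show ((a ^ 2 - u ^ 2) * (a ^ 2 - a + u ^ 2)) = 0 by rw [this]; ring]
      exact quadraticChar_zero
    · intro a ha
      exact Finset.mem_erase.mpr ⟨div_ne_zero hu2 (Finset.mem_erase.mp ha).1, Finset.mem_univ _⟩
    · intro a ha
      have ha0 : a ≠ 0 := (Finset.mem_erase.mp ha).1
      show u ^ 2 / (u ^ 2 / a) = a
      field_simp
  have split2 : (∑ z : F, quadraticChar F ((z ^ 2 - u ^ 2) * (z ^ 2 - z + u ^ 2))) =
      quadraticChar F (((0 : F) ^ 2 - u ^ 2) * ((0 : F) ^ 2 - 0 + u ^ 2)) +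
        ∑ z ∈ Finset.univ.erase (0 : F),
          quadraticChar F ((z ^ 2 - u ^ 2) * (z ^ 2 - z + u ^ 2)) :=
    (Finset.add_sum_erase Finset.univ _ (Finset.mem_univ 0)).symm
  rw [split2, key, add_zero]
  have hf0 : quadraticChar F (((0 : F) ^ 2 - u ^ 2) * ((0 : F) ^ 2 - 0 + u ^ 2)) = -1 := by
    rw [show (((0 : F) ^ 2 - u ^ 2) * ((0 : F) ^ 2 - 0 + u ^ 2)) = -1 * (u ^ 2) ^ 2 by ring]
    rw [map_mul, hneg1, quadraticChar_sq_one' hu2]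
    norm_num
  rw [hf0]
  norm_num
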